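/- For an odd prime p, the sum over k from 1 to p-1 of ((1+μ^k)(1+μ^k))/((1-μ^k)(1-μ^k)), where μ = exp(2πi/p), equals -(p-1)(p-2)/3. -/

import Mathlib

open Finset Polynomial

noncomputable def mu (p : ℕ) : ℂ := Complex.exp (2 * Real.pi * Complex.I / p)

noncomputable def Ipq (p : ℕ) (q : ℤ) : ℂ :=
  ∑ k ∈ Finset.Icc 1 (p - 1),
    ((1 + mu p ^ (k : ℤ)) * (1 + mu p ^ (q * k))) /
      ((1 - mu p ^ (k : ℤ)) * (1 - mu p ^ (q * k)))

lemma sum_id_mul_sub_one (n : ℕ) : (∑ i ∈ Finset.range n, i * (i - 1)) * 3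
    = n * (n - 1) * (n - 2) := by
  induction n with
  | zero => simp
  | succ n ih =>
    rw [Finset.sum_range_succ, add_mul, ih]
    rcases n with _ | _ | m
    · simp
    · simp
    · have e1 : m + 1 + 1 - 1 = m + 1 := rfl
      have e2 : m + 1 + 1 - 2 = m := rfl
      have e3 : m + 1 + 1 + 1 - 1 = m + 2 := rfl
      have e4 : m + 1 + 1 + 1 - 2 = m + 1 := rfl
      rw [e1, e2, e3, e4]
      ring

lemma derivative_finset_prod' {ι : Type*} [DecidableEq ι] (s : Finset ι) (f : ι → Polynomial ℂ) :
    Polynomial.derivative (∏ i ∈ s, f i)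
      = ∑ i ∈ s, (∏ j ∈ s.erase i, f j) * Polynomial.derivative (f i) := by
  induction s using Finset.induction_on with
  | empty => simp
  | @insert a s ha ih =>
    rw [Finset.prod_insert ha, Polynomial.derivative_mul, ih, Finset.sum_insert ha,
      Finset.erase_insert ha, Finset.mul_sum, mul_comm (Polynomial.derivative (f a))]
    congr 1
    apply Finset.sum_congr rfl
    intro i hi
    have hia : i ≠ a := by rintro rfl; exact ha hi
    rw [Finset.erase_insert_of_ne hia.symm, Finset.prod_insert (fun h => ha (Finset.mem_of_mem_erase h))]
    ring

theorem stmt_1 (p : ℕ) (hp : p.Prime) (hodd : Odd p) :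
    ∑ k ∈ Finset.Icc 1 (p - 1),
      ((1 + mu p ^ (k : ℤ)) * (1 + mu p ^ (k : ℤ))) /
        ((1 - mu p ^ (k : ℤ)) * (1 - mu p ^ (k : ℤ))) =
      -(((p : ℂ) - 1) * ((p : ℂ) - 2) / 3) := by
  classical
  have hp2 : 2 ≤ p := hp.two_le
  have hp0 : p ≠ 0 := by omega
  have hζ : IsPrimitiveRoot (mu p) p := Complex.isPrimitiveRoot_exp p hp0
  set ζ := mu p with hζdef
  set s : Finset ℕ := Finset.Icc 1 (p - 1) with hs
  have hpc : (p : ℂ) ≠ 0 := Nat.cast_ne_zero.2 hp0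
  have hne : ∀ k ∈ s, 1 - ζ ^ k ≠ 0 := by
    intro k hk h
    rw [hs, Finset.mem_Icc] at hk
    have h1 : ζ ^ k = 1 := by linear_combination -h
    exact hζ.pow_ne_one_of_pos_of_lt (by omega) (by omega) h1
  have himg : Polynomial.nthRootsFinset p (1 : ℂ) = (Finset.range p).image (ζ ^ ·) := by
    symm
    apply Finset.eq_of_subset_of_card_le
    · intro x hx
      simp only [Finset.mem_image, Finset.mem_range] at hx
      obtain ⟨i, hi, rfl⟩ := hx
      exact (Polynomial.mem_nthRootsFinset (by omega) 1).2 (by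
        rw [← pow_mul, mul_comm, pow_mul, hζ.pow_eq_one, one_pow])
    · rw [hζ.card_nthRootsFinset, Finset.card_image_of_injOn
        (fun i hi j hj => hζ.pow_inj (Finset.mem_range.1 hi) (Finset.mem_range.1 hj)),
        Finset.card_range]
  have hrange : Finset.range p = insert 0 s := by
    ext x; simp only [hs, Finset.mem_insert, Finset.mem_Icc, Finset.mem_range]; omega
  set Q : ℂ[X] := ∏ k ∈ s, (X - C (ζ ^ k)) with hQ
  have hprodfull : (X : ℂ[X]) ^ p - 1 = (X - 1) * Q := by
    rw [X_pow_sub_one_eq_prod (by omega) hζ, himg,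
      Finset.prod_image (fun i hi j hj => hζ.pow_inj (Finset.mem_range.1 hi)
        (Finset.mem_range.1 hj)),
      hrange, Finset.prod_insert (by simp [hs])]
    rw [pow_zero, map_one]
  have hQgeom : Q = ∑ i ∈ Finset.range p, (X : ℂ[X]) ^ i := by
    have h1 : ((X : ℂ[X]) - 1) ≠ 0 := by
      intro h
      have := congrArg (eval 0) h
      simp at this
    apply mul_left_cancel₀ h1
    rw [← hprodfull, mul_comm, geom_sum_mul]
  have hPval : eval 1 Q = (p : ℂ) := by rw [hQgeom]; simp
  have hPprod : eval 1 Q = ∏ k ∈ s, (1 - ζ ^ k) := by rw [hQ]; simp [eval_prod]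
  set c : ℕ → ℂ := fun k => (1 - ζ ^ k)⁻¹ with hc
  have herase : ∀ k ∈ s, ∏ j ∈ s.erase k, (1 - ζ ^ j) = (p : ℂ) * c k := by
    intro k hk
    have h : (1 - ζ ^ k) * ∏ j ∈ s.erase k, (1 - ζ ^ j) = (p : ℂ) := by
      rw [Finset.mul_prod_erase s (fun j => 1 - ζ ^ j) hk, ← hPprod, hPval]
    have hk' := hne k hk
    rw [hc]
    field_simp
    linear_combination h
  have herase2 : ∀ k ∈ s, ∀ l ∈ s.erase k,
      ∏ j ∈ (s.erase k).erase l, (1 - ζ ^ j) = (p : ℂ) * c k * c l := by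
    intro k hk l hl
    have h2 : (1 - ζ ^ l) * ∏ j ∈ (s.erase k).erase l, (1 - ζ ^ j) = (p : ℂ) * c k := by
      rw [Finset.mul_prod_erase (s.erase k) (fun j => 1 - ζ ^ j) hl, herase k hk]
    have hl' : 1 - ζ ^ l ≠ 0 := hne l (Finset.mem_of_mem_erase hl)
    have hk' := hne k hk
    rw [hc] at h2 ⊢
    field_simp at h2 ⊢
    linear_combination h2
  set S1 : ℂ := ∑ k ∈ s, c k with hS1d
  set S2 : ℂ := ∑ k ∈ s, (c k) ^ 2 with hS2d
  have hder1 : derivative Q = ∑ k ∈ s, ∏ j ∈ s.erase k, (X - C (ζ ^ j)) := by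
    rw [hQ, derivative_finset_prod']
    simp only [derivative_sub, derivative_X, derivative_C, sub_zero, mul_one]
  have hder1eval : eval 1 (derivative Q) = (p : ℂ) * S1 := by
    rw [hder1]
    simp only [eval_finset_sum, eval_prod, eval_sub, eval_X, eval_C]
    rw [hS1d, Finset.mul_sum]
    exact Finset.sum_congr rfl herase
  have hder1eval' : eval 1 (derivative Q) = ∑ i ∈ Finset.range p, (i : ℂ) := by
    rw [hQgeom, derivative_sum]
    simp [derivative_X_pow, eval_finset_sum]
  have hder2eval : eval 1 (derivative (derivative Q)) = (p : ℂ) * (S1 ^ 2 - S2) := by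
    rw [hder1, derivative_sum]
    simp only [derivative_finset_prod', derivative_sub, derivative_X, derivative_C, sub_zero,
      mul_one]
    simp only [eval_finset_sum, eval_prod, eval_sub, eval_X, eval_C]
    have key : ∀ k ∈ s, ∑ l ∈ s.erase k, ∏ j ∈ (s.erase k).erase l, (1 - ζ ^ j)
        = (p : ℂ) * S1 * c k - (p : ℂ) * (c k) ^ 2 := by
      intro k hk
      rw [Finset.sum_congr rfl (herase2 k hk), ← Finset.mul_sum]
      have : ∑ l ∈ s.erase k, c l = S1 - c k := by
        rw [hS1d, ← Finset.add_sum_erase s c hk]; ring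
      rw [this]; ring
    rw [Finset.sum_congr rfl key, Finset.sum_sub_distrib, ← Finset.mul_sum, ← Finset.mul_sum,
      ← hS1d, ← hS2d]
    ring
  have hder2eval' : eval 1 (derivative (derivative Q))
      = ∑ i ∈ Finset.range p, (i : ℂ) * ((i - 1 : ℕ) : ℂ) := by
    rw [hQgeom, derivative_sum]
    simp only [derivative_X_pow, derivative_sum, derivative_C_mul]
    simp [eval_finset_sum]
  -- numeric evaluation of the two sums
  have hsum1 : ∑ i ∈ Finset.range p, (i : ℂ) = (p : ℂ) * ((p : ℂ) - 1) / 2 := by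
    have h := Finset.sum_range_id_mul_two p
    have hc1 : (((∑ i ∈ Finset.range p, i) * 2 : ℕ) : ℂ) = ((p * (p - 1) : ℕ) : ℂ) := by
      exact congrArg (fun n : ℕ => (n : ℂ)) h
    push_cast [Nat.cast_sub (by omega : 1 ≤ p)] at hc1
    linear_combination hc1 / 2
  have hsum2 : ∑ i ∈ Finset.range p, (i : ℂ) * ((i - 1 : ℕ) : ℂ)
      = (p : ℂ) * ((p : ℂ) - 1) * ((p : ℂ) - 2) / 3 := by
    have h := sum_id_mul_sub_one p
    have hc1 : (((∑ i ∈ Finset.range p, i * (i - 1)) * 3 : ℕ) : ℂ)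
        = ((p * (p - 1) * (p - 2) : ℕ) : ℂ) := congrArg (fun n : ℕ => (n : ℂ)) h
    push_cast [Nat.cast_sub (by omega : 1 ≤ p), Nat.cast_sub (by omega : 2 ≤ p)] at hc1
    linear_combination hc1 / 3
  have hE1 : (p : ℂ) * S1 = (p : ℂ) * ((p : ℂ) - 1) / 2 := by
    rw [← hder1eval, hder1eval', hsum1]
  have hE2 : (p : ℂ) * (S1 ^ 2 - S2) = (p : ℂ) * ((p : ℂ) - 1) * ((p : ℂ) - 2) / 3 := by
    rw [← hder2eval, hder2eval', hsum2]
  have hS1v : S1 = ((p : ℂ) - 1) / 2 := by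
    have := mul_left_cancel₀ hpc (by linear_combination hE1 : (p : ℂ) * S1
      = (p : ℂ) * (((p : ℂ) - 1) / 2))
    exact this
  have hS2v : S2 = (((p : ℂ) - 1) / 2) ^ 2 - ((p : ℂ) - 1) * ((p : ℂ) - 2) / 3 := by
    have h := mul_left_cancel₀ hpc (by linear_combination hE2 : (p : ℂ) * (S1 ^ 2 - S2)
      = (p : ℂ) * (((p : ℂ) - 1) * ((p : ℂ) - 2) / 3))
    rw [hS1v] at h
    linear_combination -h
  -- rewrite the summand
  have hterm : ∀ k ∈ s,
      ((1 + ζ ^ (k : ℤ)) * (1 + ζ ^ (k : ℤ))) / ((1 - ζ ^ (k : ℤ)) * (1 - ζ ^ (k : ℤ)))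
      = 4 * (c k) ^ 2 - 4 * (c k) + 1 := by
    intro k hk
    have hk' := hne k hk
    rw [zpow_natCast, hc]
    field_simp
    ring
  have hcard : (s.card : ℂ) = (p : ℂ) - 1 := by
    rw [hs, Nat.card_Icc]
    push_cast [Nat.cast_sub (by omega : 1 ≤ p)]
    ring
  rw [Finset.sum_congr rfl hterm]
  rw [Finset.sum_add_distrib, Finset.sum_sub_distrib, ← Finset.mul_sum, ← Finset.mul_sum,
    ← hS2d, ← hS1d, Finset.sum_const, nsmul_eq_mul, hcard, hS1v, hS2v]
  ring
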